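/- Let w(x) = w₀(|x|) be essentially constant over dyadic annuli with constant β and μ the measure with density w on ℝⁿ (n large enough that μ(B_R) ≤ 2β w₀(R)|B_R|). Then pointwise M_μ f(x) ≤ C ( M f(x) + (1/w(x)) M(fw)(x) + H_μ f(x) ), where M is the Lebesgue Hardy–Littlewood maximal operator, M_μ the centered maximal operator with respect to μ, and H_μ f(x) = sup_{R ≥ |x|} (1/μ(B_R)) ∫_{B_R} |f| dμ; C depends only on β. -/

import Mathlib

open MeasureTheory Metric
open scoped ENNReal

/-- The centered maximal function of `g` at `x` with respect to a measure `ν` on `ℝⁿ`. -/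
noncomputable def centeredMax (n : ℕ) (ν : Measure (EuclideanSpace ℝ (Fin n)))
    (g : EuclideanSpace ℝ (Fin n) → ℝ) (x : EuclideanSpace ℝ (Fin n)) : ℝ≥0∞ :=
  ⨆ (r : ℝ) (_ : 0 < r), (ν (ball x r))⁻¹ * ∫⁻ y in ball x r, ‖g y‖₊ ∂ν

/-- The Hardy-type operator `H_ν g (x) = sup_{R ≥ |x|} (1/ν(B_R)) ∫_{B_R} |g| dν`. -/
noncomputable def hardyOp (n : ℕ) (ν : Measure (EuclideanSpace ℝ (Fin n)))
    (g : EuclideanSpace ℝ (Fin n) → ℝ) (x : EuclideanSpace ℝ (Fin n)) : ℝ≥0∞ :=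
  ⨆ (R : ℝ) (_ : ‖x‖ ≤ R),
    (ν (ball (0 : EuclideanSpace ℝ (Fin n)) R))⁻¹ *
      ∫⁻ y in ball (0 : EuclideanSpace ℝ (Fin n)) R, ‖g y‖₊ ∂ν

lemma aux_cancel {a T I : ℝ≥0∞} (ha0 : a ≠ 0) (ha : a ≠ ⊤) (h : a⁻¹ * I ≤ T) : I ≤ a * T := by
  have := mul_le_mul_right h a
  rwa [← mul_assoc, ENNReal.mul_inv_cancel ha0 ha, one_mul] at this

lemma aux_key {a m T I : ℝ≥0∞} {c1 c2 : ℝ} (hc2 : 0 < c2) (hm0 : m ≠ 0) (hm : m ≠ ⊤)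
    (ha : ENNReal.ofReal c2 * m ≤ a) (hI : I ≤ ENNReal.ofReal c1 * (m * T)) :
    a⁻¹ * I ≤ ENNReal.ofReal (c1 / c2) * T := by
  have hc2' : ENNReal.ofReal c2 ≠ 0 := (ENNReal.ofReal_pos.mpr hc2).ne'
  calc a⁻¹ * I ≤ (ENNReal.ofReal c2 * m)⁻¹ * (ENNReal.ofReal c1 * (m * T)) :=
        mul_le_mul' (ENNReal.inv_le_inv.mpr ha) hI
    _ = ((ENNReal.ofReal c2)⁻¹ * ENNReal.ofReal c1) * ((m⁻¹ * m) * T) := by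
        rw [ENNReal.mul_inv (Or.inl hc2') (Or.inl ENNReal.ofReal_ne_top)]; ring
    _ = ENNReal.ofReal (c1 / c2) * T := by
        rw [ENNReal.inv_mul_cancel hm0 hm, one_mul,
          ENNReal.ofReal_div_of_pos hc2, ENNReal.div_eq_inv_mul]

lemma aux_window {w₀ : ℝ → ℝ} {β : ℝ}
    (hdyad : ∀ R : ℝ, 0 < R → ∀ s ∈ Set.Icc R (2 * R), ∀ t ∈ Set.Icc R (2 * R), w₀ s ≤ β * w₀ t)
    {r s : ℝ} (hr : 0 < r) (h1 : r / 2 ≤ s) (h2 : s ≤ 2 * r) :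
    w₀ s ≤ β * w₀ r ∧ w₀ r ≤ β * w₀ s := by
  rcases le_or_gt s r with h | h
  · constructor
    · exact hdyad (r/2) (by linarith) s ⟨h1, by linarith⟩ r ⟨by linarith, by linarith⟩
    · exact hdyad (r/2) (by linarith) r ⟨by linarith, by linarith⟩ s ⟨h1, by linarith⟩
  · constructor
    · exact hdyad r hr s ⟨by linarith, by linarith⟩ r ⟨by linarith, by linarith⟩
    · exact hdyad r hr r ⟨by linarith, by linarith⟩ s ⟨by linarith, by linarith⟩


lemma le_centeredMax (n : ℕ) (ν : Measure (EuclideanSpace ℝ (Fin n)))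
    (g : EuclideanSpace ℝ (Fin n) → ℝ) (x : EuclideanSpace ℝ (Fin n)) {r : ℝ} (hr : 0 < r) :
    (ν (ball x r))⁻¹ * ∫⁻ y in ball x r, ‖g y‖₊ ∂ν ≤ centeredMax n ν g x := by
  have h : centeredMax n ν g x
      = ⨆ (r : ℝ) (_ : 0 < r), (ν (ball x r))⁻¹ * ∫⁻ y in ball x r, ‖g y‖₊ ∂ν := rfl
  rw [h]
  exact le_iSup₂ (f := fun (r : ℝ) (_ : 0 < r) =>
    (ν (ball x r))⁻¹ * ∫⁻ y in ball x r, ‖g y‖₊ ∂ν) r hr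

lemma le_hardyOp (n : ℕ) (ν : Measure (EuclideanSpace ℝ (Fin n)))
    (g : EuclideanSpace ℝ (Fin n) → ℝ) (x : EuclideanSpace ℝ (Fin n)) {R : ℝ} (hR : ‖x‖ ≤ R) :
    (ν (ball (0 : EuclideanSpace ℝ (Fin n)) R))⁻¹ *
      ∫⁻ y in ball (0 : EuclideanSpace ℝ (Fin n)) R, ‖g y‖₊ ∂ν ≤ hardyOp n ν g x := by
  have h : hardyOp n ν g x = ⨆ (R : ℝ) (_ : ‖x‖ ≤ R),
      (ν (ball (0 : EuclideanSpace ℝ (Fin n)) R))⁻¹ *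
        ∫⁻ y in ball (0 : EuclideanSpace ℝ (Fin n)) R, ‖g y‖₊ ∂ν := rfl
  rw [h]
  exact le_iSup₂ (f := fun (R : ℝ) (_ : ‖x‖ ≤ R) =>
    (ν (ball (0 : EuclideanSpace ℝ (Fin n)) R))⁻¹ *
      ∫⁻ y in ball (0 : EuclideanSpace ℝ (Fin n)) R, ‖g y‖₊ ∂ν) R hR

lemma half_ball {n : ℕ} (x : EuclideanSpace ℝ (Fin n)) (r : ℝ) :
    volume (ball x r) ≤ 2 * volume (ball x r ∩ {y | ‖x‖ ≤ ‖y‖}) := by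
  set S : Set (EuclideanSpace ℝ (Fin n)) := {y | ‖x‖ ≤ ‖y‖} with hS
  have hSm : MeasurableSet S := measurableSet_le measurable_const measurable_norm
  have hP : MeasurePreserving (fun y => (x + x) - y)
      (volume : Measure (EuclideanSpace ℝ (Fin n))) volume :=
    Measure.measurePreserving_sub_left volume (x + x)
  have hcover : ball x r ⊆ (ball x r ∩ S) ∪ (ball x r ∩ ((fun y => (x + x) - y) ⁻¹' S)) := by
    intro y hy
    rcases le_or_gt ‖x‖ ‖y‖ with h | h
    · exact Or.inl ⟨hy, h⟩
    · refine Or.inr ⟨hy, ?_⟩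
      simp only [Set.mem_preimage, hS, Set.mem_setOf_eq]
      by_contra hlt
      push_neg at hlt
      have e1 : ‖(x + x) - y‖ ^ 2 = ‖x‖^2 + 2 * inner ℝ x (x - y) + ‖x - y‖^2 := by
        have h' : (x + x) - y = x + (x - y) := by abel
        rw [h', norm_add_sq_real]
      have e2 : ‖y‖ ^ 2 = ‖x‖^2 - 2 * inner ℝ x (x - y) + ‖x - y‖^2 := by
        have h' : ‖x - (x - y)‖^2 = ‖x‖^2 - 2 * inner ℝ x (x - y) + ‖x - y‖^2 :=
          norm_sub_sq_real x (x - y)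
        have h'' : x - (x - y) = y := by abel
        rwa [h''] at h'
      have h1 : ‖(x+x) - y‖^2 < ‖x‖^2 := by nlinarith [norm_nonneg ((x+x) - y), norm_nonneg x]
      have h2 : ‖y‖^2 < ‖x‖^2 := by nlinarith [norm_nonneg y, norm_nonneg x]
      nlinarith [sq_nonneg ‖x - y‖]
  have hpre : (fun y => (x + x) - y) ⁻¹' (ball x r) = ball x r := by
    ext y
    simp only [Set.mem_preimage, mem_ball]
    have e : dist ((x+x) - y) x = dist y x := by
      rw [dist_eq_norm, dist_eq_norm]
      have h' : (x + x) - y - x = -(y - x) := by abel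
      rw [h', norm_neg]
    rw [e]
  have key : volume (ball x r ∩ ((fun y => (x + x) - y) ⁻¹' S)) = volume (ball x r ∩ S) := by
    have h' : ball x r ∩ ((fun y => (x + x) - y) ⁻¹' S)
        = (fun y => (x + x) - y) ⁻¹' (ball x r ∩ S) := by
      rw [Set.preimage_inter, hpre]
    rw [h', hP.measure_preimage ((measurableSet_ball.inter hSm).nullMeasurableSet)]
  calc volume (ball x r)
      ≤ volume ((ball x r ∩ S) ∪ (ball x r ∩ ((fun y => (x + x) - y) ⁻¹' S))) :=
        measure_mono hcover
    _ ≤ volume (ball x r ∩ S) + volume (ball x r ∩ ((fun y => (x + x) - y) ⁻¹' S)) :=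
        measure_union_le _ _
    _ = 2 * volume (ball x r ∩ S) := by rw [key]; ring

set_option maxHeartbeats 2000000 in
theorem stmt_11 (n : ℕ) (w₀ : ℝ → ℝ) (hw : ∀ r : ℝ, 0 ≤ r → 0 < w₀ r)
    (hwc : Continuous w₀) (β : ℝ) (hβ : 1 ≤ β)
    (hdyad : ∀ R : ℝ, 0 < R → ∀ s ∈ Set.Icc R (2 * R), ∀ t ∈ Set.Icc R (2 * R),
      w₀ s ≤ β * w₀ t)
    (μ : Measure (EuclideanSpace ℝ (Fin n)))
    (hμ : μ = volume.withDensity fun x => ENNReal.ofReal (w₀ ‖x‖))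
    (hhardy : ∀ R : ℝ, 0 < R →
      μ (ball (0 : EuclideanSpace ℝ (Fin n)) R)
        ≤ ENNReal.ofReal (2 * β * w₀ R) * volume (ball (0 : EuclideanSpace ℝ (Fin n)) R))
    (f : EuclideanSpace ℝ (Fin n) → ℝ) (x : EuclideanSpace ℝ (Fin n)) :
    centeredMax n μ f x
      ≤ ENNReal.ofReal (2 * β ^ 4 + 1) *
        (centeredMax n volume f x
          + (ENNReal.ofReal (w₀ ‖x‖))⁻¹ *
              centeredMax n volume (fun y => f y * w₀ ‖y‖) x
          + hardyOp n μ f x) := by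
  subst hμ
  have hβ0 : (0:ℝ) < β := lt_of_lt_of_le one_pos hβ
  set W : EuclideanSpace ℝ (Fin n) → ℝ≥0∞ := fun y => ENNReal.ofReal (w₀ ‖y‖) with hWdef
  have hWm : Measurable W := (hwc.comp continuous_norm).measurable.ennreal_ofReal
  set ν : Measure (EuclideanSpace ℝ (Fin n)) := volume.withDensity W with hν
  have hC1 : (1:ℝ≥0∞) ≤ ENNReal.ofReal (2 * β ^ 4 + 1) := by
    rw [← ENNReal.ofReal_one]
    exact ENNReal.ofReal_le_ofReal (by nlinarith [sq_nonneg (β^2)])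
  rcases Nat.eq_zero_or_pos n with hn0 | hn
  · -- trivial case n = 0
    subst hn0
    have hx : x = (0 : EuclideanSpace ℝ (Fin 0)) := Subsingleton.elim x 0
    subst hx
    refine iSup₂_le fun r hr => ?_
    calc (ν (ball (0 : EuclideanSpace ℝ (Fin 0)) r))⁻¹ *
          ∫⁻ y in ball (0 : EuclideanSpace ℝ (Fin 0)) r, ‖f y‖₊ ∂ν
        ≤ hardyOp 0 ν f 0 := le_hardyOp 0 ν f 0 (by simpa using hr.le)
      _ ≤ centeredMax 0 volume f 0
          + (ENNReal.ofReal (w₀ ‖(0 : EuclideanSpace ℝ (Fin 0))‖))⁻¹ *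
              centeredMax 0 volume (fun y => f y * w₀ ‖y‖) 0
          + hardyOp 0 ν f 0 := le_add_self
      _ ≤ _ := le_mul_of_one_le_left (zero_le) hC1
  -- main case n ≥ 1
  set C0 : ℝ≥0∞ := ENNReal.ofReal (2 * β ^ 4 + 1) with hC0
  set T1 : ℝ≥0∞ := centeredMax n volume f x with hT1
  set T2' : ℝ≥0∞ := centeredMax n volume (fun y => f y * w₀ ‖y‖) x with hT2
  set T3 : ℝ≥0∞ := hardyOp n ν f x with hT3
  set T2 : ℝ≥0∞ := (ENNReal.ofReal (w₀ ‖x‖))⁻¹ * T2' with hT2f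
  refine iSup₂_le fun r hr => ?_
  -- useful conversion for integrals with respect to ν
  have hconv : ∀ s : Set (EuclideanSpace ℝ (Fin n)), MeasurableSet s →
      ∀ g : EuclideanSpace ℝ (Fin n) → ℝ≥0∞,
      ∫⁻ y in s, g y ∂ν = ∫⁻ y in s, W y * g y ∂volume := by
    intro s hs g
    rw [hν, setLIntegral_withDensity_eq_setLIntegral_mul_non_measurable volume hWm g hs
      (Filter.Eventually.of_forall fun y => ENNReal.ofReal_lt_top)]
    rfl
  have hball : MeasurableSet (ball x r) := measurableSet_ball
  have hvolB0 : volume (ball x r) ≠ 0 := (measure_ball_pos volume x hr).ne'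
  have hvolBt : volume (ball x r) ≠ ⊤ := measure_ball_lt_top.ne
  have hMF : ∫⁻ y in ball x r, (‖f y‖₊ : ℝ≥0∞) ∂volume ≤ volume (ball x r) * T1 :=
    aux_cancel hvolB0 hvolBt (le_centeredMax n volume f x hr)
  rcases le_or_gt r ‖x‖ with hA | hB
  · -- Case A : r ≤ ‖x‖
    have hx0 : 0 < ‖x‖ := lt_of_lt_of_le hr hA
    set S := ball x r ∩ {y : EuclideanSpace ℝ (Fin n) | ‖x‖ ≤ ‖y‖} with hSdef
    have hSm : MeasurableSet S :=
      hball.inter (measurableSet_le measurable_const measurable_norm)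
    have hWlow : ∀ y ∈ S, ENNReal.ofReal (w₀ ‖x‖ / β) ≤ W y := by
      rintro y ⟨hy1, hy2⟩
      have hd1 : ‖y - x‖ < r := by rw [← dist_eq_norm]; exact mem_ball.mp hy1
      have hy3 : ‖y‖ ≤ ‖y - x‖ + ‖x‖ := by simpa using norm_add_le (y - x) x
      have hy4 : ‖y‖ ≤ 2 * ‖x‖ := by linarith
      have hd := hdyad ‖x‖ hx0 ‖x‖ ⟨le_refl _, by linarith⟩ ‖y‖ ⟨hy2, hy4⟩
      apply ENNReal.ofReal_le_ofReal
      rw [div_le_iff₀ hβ0]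
      linarith
    have hlow : ENNReal.ofReal (w₀ ‖x‖ / (2*β)) * volume (ball x r) ≤ ν (ball x r) := by
      calc ENNReal.ofReal (w₀ ‖x‖ / (2*β)) * volume (ball x r)
          ≤ ENNReal.ofReal (w₀ ‖x‖ / (2*β)) * (2 * volume S) :=
            mul_le_mul_right (half_ball x r) _
        _ = ENNReal.ofReal (w₀ ‖x‖ / β) * volume S := by
            have h2 : (2:ℝ≥0∞) * ENNReal.ofReal (w₀ ‖x‖ / (2*β))
                = ENNReal.ofReal (w₀ ‖x‖ / β) := by
              rw [(by norm_num : (2:ℝ≥0∞) * ENNReal.ofReal (w₀ ‖x‖ / (2*β)) = ENNReal.ofReal 2 * ENNReal.ofReal (w₀ ‖x‖ / (2*β))),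
                ← ENNReal.ofReal_mul (by norm_num)]
              congr 1
              field_simp
            rw [← h2]
            ring
        _ ≤ ∫⁻ y in S, W y ∂volume := by
            rw [← setLIntegral_const]
            exact setLIntegral_mono' hSm hWlow
        _ ≤ ∫⁻ y in ball x r, W y ∂volume := lintegral_mono_set Set.inter_subset_left
        _ = ν (ball x r) := by rw [hν, withDensity_apply W hball]
    have hpt : ∀ y : EuclideanSpace ℝ (Fin n),
        W y * (‖f y‖₊ : ℝ≥0∞) = (‖f y * w₀ ‖y‖‖₊ : ℝ≥0∞) := by
      intro y
      rw [nnnorm_mul, ENNReal.coe_mul, show ((‖w₀ ‖y‖‖₊ : NNReal) : ℝ≥0∞) = ENNReal.ofReal (w₀ ‖y‖) from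
          Real.enorm_eq_ofReal (hw _ (norm_nonneg y)).le,
        mul_comm]
    have hIeq : ∫⁻ y in ball x r, (‖f y‖₊ : ℝ≥0∞) ∂ν
        = ∫⁻ y in ball x r, (‖f y * w₀ ‖y‖‖₊ : ℝ≥0∞) ∂volume := by
      rw [hconv _ hball]
      exact lintegral_congr fun y => hpt y
    have hfw : ∫⁻ y in ball x r, (‖f y * w₀ ‖y‖‖₊ : ℝ≥0∞) ∂volume
        ≤ volume (ball x r) * T2' :=
      aux_cancel hvolB0 hvolBt (le_centeredMax n volume (fun y => f y * w₀ ‖y‖) x hr)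
    have hkey : (ν (ball x r))⁻¹ * (∫⁻ y in ball x r, (‖f y‖₊ : ℝ≥0∞) ∂ν)
        ≤ ENNReal.ofReal (1 / (w₀ ‖x‖ / (2*β))) * T2' :=
      aux_key (div_pos (hw _ (norm_nonneg x)) (by positivity)) hvolB0 hvolBt hlow
        (by rw [ENNReal.ofReal_one, one_mul, hIeq]; exact hfw)
    refine le_trans hkey ?_
    have e1 : (1 : ℝ) / (w₀ ‖x‖ / (2*β)) = 2*β * (w₀ ‖x‖)⁻¹ := by
      field_simp
    rw [e1, ENNReal.ofReal_mul (by positivity),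
      ENNReal.ofReal_inv_of_pos (hw _ (norm_nonneg x))]
    have hcoef : (2*β : ℝ) ≤ 2*β^4+1 := by
      have hb3 : (0:ℝ) ≤ β * (β - 1) * (β^2+β+1) :=
        mul_nonneg (mul_nonneg hβ0.le (by linarith)) (by positivity)
      nlinarith [hb3]
    calc ENNReal.ofReal (2*β) * (ENNReal.ofReal (w₀ ‖x‖))⁻¹ * T2'
        ≤ C0 * T2 := by
          rw [hT2f, ← mul_assoc]
          exact mul_le_mul_left (mul_le_mul_left
            (ENNReal.ofReal_le_ofReal hcoef) _) _
      _ ≤ C0 * (T1 + T2 + T3) := mul_le_mul_right (le_trans le_add_self le_self_add) _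
  · -- Case B : ‖x‖ < r
    have hrx : ‖x‖ ≤ r := hB.le
    set t : ℝ := ((1:ℝ)/2)^n with htdef
    have ht0 : (0:ℝ) < t := by positivity
    have htle : t ≤ 1/2 := by
      calc t ≤ ((1:ℝ)/2)^1 := pow_le_pow_of_le_one (by norm_num) (by norm_num) hn
        _ = 1/2 := pow_one _
    have ht1 : (0:ℝ) < 1 - t := by linarith
    have hwr : 0 < w₀ r := hw r hr.le
    haveI : Nontrivial (EuclideanSpace ℝ (Fin n)) :=
      Module.nontrivial_of_finrank_pos (R := ℝ)
        (by rw [finrank_euclideanSpace_fin]; omega)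
    have hvolz : ∀ z : EuclideanSpace ℝ (Fin n), volume (ball z r) = volume (ball x r) :=
      fun z => by rw [Measure.addHaar_ball_center volume z r,
        Measure.addHaar_ball_center volume x r]
    have hvolN : volume (ball (0:EuclideanSpace ℝ (Fin n)) (r/2))
        = ENNReal.ofReal t * volume (ball x r) := by
      have hrn : ((r/2)^n : ℝ) = t * r^n := by
        rw [htdef, div_pow, div_pow, one_pow]; ring
      rw [← hvolz 0, Measure.addHaar_ball volume (0:EuclideanSpace ℝ (Fin n))
          (by linarith : (0:ℝ) ≤ r/2),
        Measure.addHaar_ball volume (0:EuclideanSpace ℝ (Fin n)) hr.le,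
        finrank_euclideanSpace_fin, hrn, ENNReal.ofReal_mul ht0.le, mul_assoc]
    have hid : ENNReal.ofReal (1-t) * volume (ball x r)
        + ENNReal.ofReal t * volume (ball x r) = volume (ball x r) := by
      rw [← add_mul, ← ENNReal.ofReal_add (by linarith) ht0.le]
      norm_num
    have hwin : ∀ s : ℝ, r/2 ≤ s → s ≤ 2*r → w₀ s ≤ β * w₀ r ∧ w₀ r ≤ β * w₀ s :=
      fun s h1 h2 => aux_window hdyad hr h1 h2
    have hWub : ∀ y : EuclideanSpace ℝ (Fin n), r/2 ≤ ‖y‖ → ‖y‖ ≤ 2*r →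
        W y ≤ ENNReal.ofReal (β * w₀ r) :=
      fun y h1 h2 => ENNReal.ofReal_le_ofReal (hwin _ h1 h2).1
    have hWlb : ∀ y : EuclideanSpace ℝ (Fin n), r/2 ≤ ‖y‖ → ‖y‖ ≤ 2*r →
        ENNReal.ofReal (w₀ r / β) ≤ W y := by
      intro y h1 h2
      have := (hwin _ h1 h2).2
      apply ENNReal.ofReal_le_ofReal
      rw [div_le_iff₀ hβ0]
      linarith
    have hmem : ∀ z : EuclideanSpace ℝ (Fin n), ‖z‖ ≤ r →
        ∀ y ∈ ball z r \ ball (0:EuclideanSpace ℝ (Fin n)) (r/2),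
          r/2 ≤ ‖y‖ ∧ ‖y‖ ≤ 2*r := by
      rintro z hz y ⟨hy1, hy2⟩
      constructor
      · by_contra h
        push_neg at h
        exact hy2 (mem_ball_zero_iff.mpr h)
      · have hd1 : ‖y - z‖ < r := by rw [← dist_eq_norm]; exact mem_ball.mp hy1
        have hy3 : ‖y‖ ≤ ‖y - z‖ + ‖z‖ := by simpa using norm_add_le (y - z) z
        linarith
    set c2 : ℝ := (1-t) * (w₀ r / β) with hc2def
    have hc2 : (0:ℝ) < c2 := by positivity
    have hlowgen : ∀ z : EuclideanSpace ℝ (Fin n), ‖z‖ ≤ r →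
        ENNReal.ofReal c2 * volume (ball x r) ≤ ν (ball z r) := by
      intro z hz
      have hdm : MeasurableSet (ball z r \ ball (0:EuclideanSpace ℝ (Fin n)) (r/2)) :=
        measurableSet_ball.diff measurableSet_ball
      have hsub : volume (ball z r)
          ≤ volume (ball z r \ ball (0:EuclideanSpace ℝ (Fin n)) (r/2))
            + ENNReal.ofReal t * volume (ball x r) := by
        calc volume (ball z r)
            ≤ volume ((ball z r \ ball (0:EuclideanSpace ℝ (Fin n)) (r/2))
                ∪ ball (0:EuclideanSpace ℝ (Fin n)) (r/2)) := by
              refine measure_mono fun y hy => ?_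
              rcases em (y ∈ ball (0:EuclideanSpace ℝ (Fin n)) (r/2)) with h|h
              · exact Or.inr h
              · exact Or.inl ⟨hy, h⟩
          _ ≤ volume (ball z r \ ball (0:EuclideanSpace ℝ (Fin n)) (r/2))
              + volume (ball (0:EuclideanSpace ℝ (Fin n)) (r/2)) := measure_union_le _ _
          _ = _ := by rw [hvolN]
      have hge : ENNReal.ofReal (1-t) * volume (ball x r)
          ≤ volume (ball z r \ ball (0:EuclideanSpace ℝ (Fin n)) (r/2)) := by
        rw [← ENNReal.add_le_add_iff_right
          (ENNReal.mul_ne_top ENNReal.ofReal_ne_top hvolBt)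
          (a := ENNReal.ofReal t * volume (ball x r))]
        calc ENNReal.ofReal (1-t) * volume (ball x r) + ENNReal.ofReal t * volume (ball x r)
            = volume (ball x r) := hid
          _ = volume (ball z r) := (hvolz z).symm
          _ ≤ _ := hsub
      calc ENNReal.ofReal c2 * volume (ball x r)
          = ENNReal.ofReal (w₀ r / β) * (ENNReal.ofReal (1-t) * volume (ball x r)) := by
            rw [hc2def, ENNReal.ofReal_mul (by linarith)]
            ring
        _ ≤ ENNReal.ofReal (w₀ r / β)
            * volume (ball z r \ ball (0:EuclideanSpace ℝ (Fin n)) (r/2)) :=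
            mul_le_mul_right hge _
        _ ≤ ∫⁻ y in ball z r \ ball (0:EuclideanSpace ℝ (Fin n)) (r/2), W y ∂volume := by
            rw [← setLIntegral_const]
            exact setLIntegral_mono' hdm
              (fun y hy => hWlb y (hmem z hz y hy).1 (hmem z hz y hy).2)
        _ ≤ ∫⁻ y in ball z r, W y ∂volume := lintegral_mono_set Set.diff_subset
        _ = ν (ball z r) := by rw [hν, withDensity_apply W measurableSet_ball]
    have hdmx : MeasurableSet (ball x r \ ball (0:EuclideanSpace ℝ (Fin n)) (r/2)) :=
      measurableSet_ball.diff measurableSet_ball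
    have hsplitI : ∫⁻ y in ball x r, (‖f y‖₊ : ℝ≥0∞) ∂ν
        ≤ (∫⁻ y in ball x r \ ball (0:EuclideanSpace ℝ (Fin n)) (r/2), (‖f y‖₊ : ℝ≥0∞) ∂ν)
          + ∫⁻ y in ball (0:EuclideanSpace ℝ (Fin n)) r, (‖f y‖₊ : ℝ≥0∞) ∂ν := by
      calc ∫⁻ y in ball x r, (‖f y‖₊ : ℝ≥0∞) ∂ν
          = ∫⁻ y in (ball x r \ ball (0:EuclideanSpace ℝ (Fin n)) (r/2))
              ∪ (ball x r ∩ ball (0:EuclideanSpace ℝ (Fin n)) (r/2)),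
              (‖f y‖₊ : ℝ≥0∞) ∂ν := by rw [Set.diff_union_inter]
        _ ≤ ∫⁻ y, (‖f y‖₊ : ℝ≥0∞)
            ∂(ν.restrict (ball x r \ ball (0:EuclideanSpace ℝ (Fin n)) (r/2))
              + ν.restrict (ball x r ∩ ball (0:EuclideanSpace ℝ (Fin n)) (r/2))) :=
            lintegral_mono' (Measure.restrict_union_le _ _) le_rfl
        _ = (∫⁻ y in ball x r \ ball (0:EuclideanSpace ℝ (Fin n)) (r/2), (‖f y‖₊ : ℝ≥0∞) ∂ν)
            + ∫⁻ y in ball x r ∩ ball (0:EuclideanSpace ℝ (Fin n)) (r/2),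
                (‖f y‖₊ : ℝ≥0∞) ∂ν := lintegral_add_measure _ _ _
        _ ≤ _ := add_le_add le_rfl (lintegral_mono_set
            (Set.inter_subset_right.trans (ball_subset_ball (by linarith))))
    -- far part
    have hfar : ∫⁻ y in ball x r \ ball (0:EuclideanSpace ℝ (Fin n)) (r/2),
        (‖f y‖₊ : ℝ≥0∞) ∂ν ≤ ENNReal.ofReal (β * w₀ r) * (volume (ball x r) * T1) := by
      rw [hconv _ hdmx]
      calc ∫⁻ y in ball x r \ ball (0:EuclideanSpace ℝ (Fin n)) (r/2),
            W y * (‖f y‖₊ : ℝ≥0∞) ∂volume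
          ≤ ∫⁻ y in ball x r \ ball (0:EuclideanSpace ℝ (Fin n)) (r/2),
              ENNReal.ofReal (β * w₀ r) * (‖f y‖₊ : ℝ≥0∞) ∂volume :=
            setLIntegral_mono' hdmx (fun y hy =>
              mul_le_mul_left (hWub y (hmem x hrx y hy).1 (hmem x hrx y hy).2) _)
        _ = ENNReal.ofReal (β * w₀ r)
            * ∫⁻ y in ball x r \ ball (0:EuclideanSpace ℝ (Fin n)) (r/2),
                (‖f y‖₊ : ℝ≥0∞) ∂volume := lintegral_const_mul' _ _ ENNReal.ofReal_ne_top
        _ ≤ ENNReal.ofReal (β * w₀ r) * ∫⁻ y in ball x r, (‖f y‖₊ : ℝ≥0∞) ∂volume :=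
            mul_le_mul_right (lintegral_mono_set Set.diff_subset) _
        _ ≤ _ := mul_le_mul_right hMF _
    -- near part
    have hNsub : ball (0:EuclideanSpace ℝ (Fin n)) (r/2)
        ⊆ ball (0:EuclideanSpace ℝ (Fin n)) r := ball_subset_ball (by linarith)
    set c3 : ℝ := (2*β^2*t + β*(1-t)) * w₀ r with hc3def
    have hup : ν (ball (0:EuclideanSpace ℝ (Fin n)) r)
        ≤ ENNReal.ofReal c3 * volume (ball x r) := by
      have hsplit : ν (ball (0:EuclideanSpace ℝ (Fin n)) r)
          = ν (ball (0:EuclideanSpace ℝ (Fin n)) (r/2))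
            + ν (ball (0:EuclideanSpace ℝ (Fin n)) r
                \ ball (0:EuclideanSpace ℝ (Fin n)) (r/2)) := by
        rw [← measure_union Set.disjoint_sdiff_right
          (measurableSet_ball.diff measurableSet_ball), Set.union_diff_cancel hNsub]
      have hwrne : w₀ r ≠ 0 := hwr.ne'
      have hβne : β ≠ 0 := hβ0.ne'
      have ht1ne : (1-t) ≠ 0 := ht1.ne'
      have hw2 : 0 < w₀ (r/2) := hw _ (by linarith)
      have hw12 : w₀ (r/2) ≤ β * w₀ r := (hwin (r/2) le_rfl (by linarith)).1
      have h1 : ν (ball (0:EuclideanSpace ℝ (Fin n)) (r/2))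
          ≤ ENNReal.ofReal (2*β^2*t*w₀ r) * volume (ball x r) := by
        refine le_trans (hhardy (r/2) (by linarith)) ?_
        rw [hvolN, ← mul_assoc, ← ENNReal.ofReal_mul
          (mul_nonneg (by positivity) hw2.le)]
        refine mul_le_mul_left (ENNReal.ofReal_le_ofReal ?_) _
        nlinarith [mul_le_mul_of_nonneg_left hw12
          (mul_nonneg (mul_nonneg (by norm_num : (0:ℝ) ≤ 2) hβ0.le) ht0.le)]
      have hdm0 : MeasurableSet (ball (0:EuclideanSpace ℝ (Fin n)) r
          \ ball (0:EuclideanSpace ℝ (Fin n)) (r/2)) :=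
        measurableSet_ball.diff measurableSet_ball
      have hNfin : volume (ball (0:EuclideanSpace ℝ (Fin n)) (r/2)) ≠ ⊤ := by
        rw [hvolN]; exact ENNReal.mul_ne_top ENNReal.ofReal_ne_top hvolBt
      have h2 : ν (ball (0:EuclideanSpace ℝ (Fin n)) r
          \ ball (0:EuclideanSpace ℝ (Fin n)) (r/2))
          ≤ ENNReal.ofReal (β*(1-t)*w₀ r) * volume (ball x r) := by
        rw [hν, withDensity_apply W hdm0]
        have hmem0 : ∀ y ∈ ball (0:EuclideanSpace ℝ (Fin n)) r
            \ ball (0:EuclideanSpace ℝ (Fin n)) (r/2), r/2 ≤ ‖y‖ ∧ ‖y‖ ≤ 2*r := by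
          rintro y ⟨hy1, hy2⟩
          constructor
          · by_contra h
            push_neg at h
            exact hy2 (mem_ball_zero_iff.mpr h)
          · have := mem_ball_zero_iff.mp hy1
            linarith
        calc ∫⁻ y in ball (0:EuclideanSpace ℝ (Fin n)) r
              \ ball (0:EuclideanSpace ℝ (Fin n)) (r/2), W y ∂volume
            ≤ ∫⁻ _ in ball (0:EuclideanSpace ℝ (Fin n)) r
                \ ball (0:EuclideanSpace ℝ (Fin n)) (r/2),
                ENNReal.ofReal (β * w₀ r) ∂volume :=
              setLIntegral_mono' hdm0
                (fun y hy => hWub y (hmem0 y hy).1 (hmem0 y hy).2)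
          _ = ENNReal.ofReal (β*w₀ r) * volume (ball (0:EuclideanSpace ℝ (Fin n)) r
                \ ball (0:EuclideanSpace ℝ (Fin n)) (r/2)) := setLIntegral_const _ _
          _ ≤ ENNReal.ofReal (β*w₀ r) * (ENNReal.ofReal (1-t) * volume (ball x r)) := by
              refine mul_le_mul_right ?_ _
              rw [measure_diff hNsub measurableSet_ball.nullMeasurableSet hNfin,
                hvolz 0, hvolN, tsub_le_iff_right]
              exact le_of_eq hid.symm
          _ = ENNReal.ofReal (β*(1-t)*w₀ r) * volume (ball x r) := by
              rw [← mul_assoc, ← ENNReal.ofReal_mul (mul_nonneg hβ0.le hwr.le),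
                show β*w₀ r*(1-t) = β*(1-t)*w₀ r from by ring]
      calc ν (ball (0:EuclideanSpace ℝ (Fin n)) r)
          = ν (ball (0:EuclideanSpace ℝ (Fin n)) (r/2))
            + ν (ball (0:EuclideanSpace ℝ (Fin n)) r
                \ ball (0:EuclideanSpace ℝ (Fin n)) (r/2)) := hsplit
        _ ≤ ENNReal.ofReal (2*β^2*t*w₀ r) * volume (ball x r)
            + ENNReal.ofReal (β*(1-t)*w₀ r) * volume (ball x r) := add_le_add h1 h2
        _ = ENNReal.ofReal c3 * volume (ball x r) := by
            rw [← add_mul, ← ENNReal.ofReal_add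
              (by positivity) (mul_nonneg (mul_nonneg hβ0.le (by linarith)) hwr.le),
              hc3def, show 2*β^2*t*w₀ r + β*(1-t)*w₀ r = (2*β^2*t + β*(1-t)) * w₀ r
                from by ring]
    have hμ0 : ν (ball (0:EuclideanSpace ℝ (Fin n)) r) ≠ 0 := by
      have h := hlowgen 0 (by simpa using hr.le)
      have hpos : (0:ℝ≥0∞) < ENNReal.ofReal c2 * volume (ball x r) :=
        ENNReal.mul_pos (ENNReal.ofReal_pos.mpr hc2).ne' hvolB0
      exact (lt_of_lt_of_le hpos h).ne'
    have hμfin : ν (ball (0:EuclideanSpace ℝ (Fin n)) r) ≠ ⊤ :=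
      ne_top_of_le_ne_top (ENNReal.mul_ne_top ENNReal.ofReal_ne_top hvolBt) hup
    have hHle : (ν (ball (0:EuclideanSpace ℝ (Fin n)) r))⁻¹
        * ∫⁻ y in ball (0:EuclideanSpace ℝ (Fin n)) r, (‖f y‖₊ : ℝ≥0∞) ∂ν ≤ T3 :=
      le_hardyOp n ν f x hrx
    have hnear : ∫⁻ y in ball (0:EuclideanSpace ℝ (Fin n)) r, (‖f y‖₊ : ℝ≥0∞) ∂ν
        ≤ ENNReal.ofReal c3 * (volume (ball x r) * T3) := by
      calc ∫⁻ y in ball (0:EuclideanSpace ℝ (Fin n)) r, (‖f y‖₊ : ℝ≥0∞) ∂ν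
          ≤ ν (ball (0:EuclideanSpace ℝ (Fin n)) r) * T3 := aux_cancel hμ0 hμfin hHle
        _ ≤ (ENNReal.ofReal c3 * volume (ball x r)) * T3 := mul_le_mul_left hup _
        _ = _ := mul_assoc _ _ _
    have hk1 := aux_key hc2 hvolB0 hvolBt (hlowgen x hrx) hfar
    have hk2 := aux_key hc2 hvolB0 hvolBt (hlowgen x hrx) hnear
    have hwrne : w₀ r ≠ 0 := hwr.ne'
    have hβne : β ≠ 0 := hβ0.ne'
    have ht1ne : (1-t) ≠ 0 := ht1.ne'
    have hdiv1 : (β * w₀ r) / c2 ≤ 2*β^4+1 := by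
      have he : (β*w₀ r)/c2 = β^2/(1-t) := by
        rw [hc2def]; field_simp
      rw [he, div_le_iff₀ ht1]
      nlinarith [sq_nonneg (β^2-1), htle, hβ]
    have hdiv2 : c3 / c2 ≤ 2*β^4+1 := by
      have he : c3/c2 = (2*β^2*t + β*(1-t))*β/(1-t) := by
        rw [hc3def, hc2def]; field_simp
      rw [he, div_le_iff₀ ht1]
      nlinarith [mul_nonneg (sq_nonneg (β-1)) (by positivity : (0:ℝ) ≤ 2*β^2+2*β+1),
        mul_nonneg (by linarith : (0:ℝ) ≤ 1/2 - t)
          (by nlinarith : (0:ℝ) ≤ 2*β^4+1+2*β^3-β^2)]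
    calc (ν (ball x r))⁻¹ * ∫⁻ y in ball x r, (‖f y‖₊ : ℝ≥0∞) ∂ν
        ≤ (ν (ball x r))⁻¹ *
            ((∫⁻ y in ball x r \ ball (0:EuclideanSpace ℝ (Fin n)) (r/2),
              (‖f y‖₊ : ℝ≥0∞) ∂ν)
              + ∫⁻ y in ball (0:EuclideanSpace ℝ (Fin n)) r, (‖f y‖₊ : ℝ≥0∞) ∂ν) :=
          mul_le_mul_right hsplitI _
      _ = (ν (ball x r))⁻¹ *
            (∫⁻ y in ball x r \ ball (0:EuclideanSpace ℝ (Fin n)) (r/2),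
              (‖f y‖₊ : ℝ≥0∞) ∂ν)
          + (ν (ball x r))⁻¹ *
            ∫⁻ y in ball (0:EuclideanSpace ℝ (Fin n)) r, (‖f y‖₊ : ℝ≥0∞) ∂ν :=
          mul_add _ _ _
      _ ≤ ENNReal.ofReal ((β*w₀ r)/c2) * T1 + ENNReal.ofReal (c3/c2) * T3 :=
          add_le_add hk1 hk2
      _ ≤ C0 * T1 + C0 * T3 := add_le_add
          (mul_le_mul_left (by rw [hC0]; exact ENNReal.ofReal_le_ofReal hdiv1) _)
          (mul_le_mul_left (by rw [hC0]; exact ENNReal.ofReal_le_ofReal hdiv2) _)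
      _ ≤ C0 * (T1 + T2 + T3) := by
          rw [mul_add, mul_add]
          exact add_le_add le_self_add le_rfl
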